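/- For any 3-form T on euclidean ℝⁿ, the Lie subalgebra g*_T of so(n) generated by all interior products X ⌟ T is semisimple and coincides with its derived algebra [g*_T, g*_T]. -/

import Mathlib

attribute [local instance 100] LieRing.ofAssociativeRing

open Matrix

/-- The 2-form `X ⌟ T` of a 3-form `T`, viewed as a matrix (element of
`so(n)`): `(X ⌟ T)_{jk} = Σᵢ Xᵢ T_{ijk}`. -/
def matT (n : ℕ) (T : Fin n → Fin n → Fin n → ℝ) (X : Fin n → ℝ) :
    Matrix (Fin n) (Fin n) ℝ :=
  Matrix.of fun j k => ∑ i, X i * T i j k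

/-- The Lie algebra `g*_T ⊆ so(n)` generated by the elements `X ⌟ T`,
`X ∈ ℝⁿ`. -/
def gStarT (n : ℕ) (T : Fin n → Fin n → Fin n → ℝ) :
    LieSubalgebra ℝ (Matrix (Fin n) (Fin n) ℝ) :=
  LieSubalgebra.lieSpan ℝ (Matrix (Fin n) (Fin n) ℝ)
    {B | ∃ X : Fin n → ℝ, B = matT n T X}

section Aux

variable (n : ℕ) (T : Fin n → Fin n → Fin n → ℝ)

/-- Skew-symmetric matrices form a Lie subalgebra. -/
def skLie : LieSubalgebra ℝ (Matrix (Fin n) (Fin n) ℝ) where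
  carrier := {A | Aᵀ = -A}
  add_mem' := by
    intro A B hA hB
    simp only [Set.mem_setOf_eq] at *
    rw [Matrix.transpose_add, hA, hB, neg_add]
  zero_mem' := by simp
  smul_mem' := by
    intro c A hA
    simp only [Set.mem_setOf_eq] at *
    rw [Matrix.transpose_smul, hA, smul_neg]
  lie_mem' := by
    intro A B hA hB
    simp only [Set.mem_setOf_eq] at *
    rw [Ring.lie_def, Matrix.transpose_sub, Matrix.transpose_mul, Matrix.transpose_mul,
      hA, hB]
    noncomm_ring

variable (halt : ∀ i j k : Fin n, T i j k = - T j i k ∧ T i j k = - T i k j)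

include halt in
lemma gStarT_skew : ∀ A ∈ gStarT n T, Aᵀ = -A := by
  intro A hA
  have h : gStarT n T ≤ skLie n := by
    apply LieSubalgebra.lieSpan_le.mpr
    rintro B ⟨X, rfl⟩
    show (matT n T X)ᵀ = -(matT n T X)
    ext j k
    simp only [matT, Matrix.transpose_apply, Matrix.neg_apply, Matrix.of_apply,
      ← Finset.sum_neg_distrib]
    refine Finset.sum_congr rfl fun i _ => ?_
    rw [(halt i j k).2]
    ring
  exact h hA

include halt in
lemma hTaba : ∀ a b : Fin n, T a b a = 0 := by
  intro a b
  have h1 : T a a b = 0 := by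
    have := (halt a a b).1
    linarith
  have := (halt a b a).2
  rw [this, h1, neg_zero]

include halt in
lemma key_trace (Z : Matrix (Fin n) (Fin n) ℝ)
    (hc : ∀ X, ⁅Z, matT n T X⁆ = 0) (X : Fin n → ℝ) :
    (Zᵀ * matT n T X).trace = 0 := by
  -- entrywise form of centrality
  have hE : ∀ m j k : Fin n, ∑ l, Z j l * T m l k = ∑ l, T m j l * Z l k := by
    intro m j k
    have h := hc (Pi.single m 1)
    have h2 := congrFun (congrFun h j) k
    simp only [Ring.lie_def, Matrix.sub_apply, Matrix.mul_apply, matT, Matrix.of_apply,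
      Matrix.zero_apply] at h2
    have hsingle : ∀ a b : Fin n, (∑ i, (Pi.single m 1 : Fin n → ℝ) i * T i a b) = T m a b := by
      intro a b
      rw [Finset.sum_eq_single m]
      · simp
      · intro i _ hi; simp [Pi.single_apply, hi]
      · simp
    simp only [hsingle] at h2
    rw [sub_eq_zero] at h2
    exact h2
  -- contracted identity
  have hrow : ∀ i : Fin n, ∑ k, ∑ l, T k i l * Z l k = 0 := by
    intro i
    have : ∑ k, ∑ l, Z i l * T k l k = ∑ k, ∑ l, T k i l * Z l k :=
      Finset.sum_congr rfl fun k _ => hE k i k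
    rw [← this]
    apply Finset.sum_eq_zero
    intro k _
    apply Finset.sum_eq_zero
    intro l _
    rw [hTaba n T halt k l, mul_zero]
  -- rewrite using full antisymmetry
  have hrow' : ∀ i : Fin n, ∑ a, ∑ b, Z a b * T i a b = 0 := by
    intro i
    have h := hrow i
    rw [Finset.sum_comm] at h
    rw [← h]
    refine Finset.sum_congr rfl fun a _ => Finset.sum_congr rfl fun b _ => ?_
    have h1 : T b i a = - T i b a := (halt b i a).1
    have h2 : T i b a = - T i a b := (halt i b a).2
    rw [h1, h2]; ring
  -- compute the trace
  rw [Matrix.trace]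
  simp only [Matrix.diag_apply, Matrix.mul_apply, Matrix.transpose_apply, matT, Matrix.of_apply]
  have : ∀ j k : Fin n, Z k j * ∑ i, X i * T i k j = ∑ i, X i * (Z k j * T i k j) := by
    intro j k; rw [Finset.mul_sum]; exact Finset.sum_congr rfl fun i _ => by ring
  simp only [this]
  rw [Finset.sum_comm]
  have swap : ∀ k : Fin n, ∑ j, ∑ i, X i * (Z k j * T i k j)
      = ∑ i, ∑ j, X i * (Z k j * T i k j) := fun k => Finset.sum_comm
  simp only [swap]
  rw [Finset.sum_comm]
  apply Finset.sum_eq_zero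
  intro i _
  have : ∑ k, ∑ j, X i * (Z k j * T i k j) = X i * ∑ k, ∑ j, Z k j * T i k j := by
    rw [Finset.mul_sum]
    exact Finset.sum_congr rfl fun k _ => by rw [Finset.mul_sum]
  rw [this, hrow' i, mul_zero]

/-- For a central element `Z`, the subalgebra of matrices commuting with `Z` and
trace-orthogonal to `Z`. -/
def commTrace (Z : Matrix (Fin n) (Fin n) ℝ) (hZ : Zᵀ = -Z) :
    LieSubalgebra ℝ (Matrix (Fin n) (Fin n) ℝ) where
  carrier := {A | ⁅Z, A⁆ = 0 ∧ (Zᵀ * A).trace = 0}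
  add_mem' := by
    intro A B hA hB
    refine ⟨?_, ?_⟩
    · rw [lie_add, hA.1, hB.1, add_zero]
    · rw [Matrix.mul_add, Matrix.trace_add, hA.2, hB.2, add_zero]
  zero_mem' := by simp
  smul_mem' := by
    intro c A hA
    refine ⟨?_, ?_⟩
    · rw [lie_smul, hA.1, smul_zero]
    · rw [Matrix.mul_smul, Matrix.trace_smul, hA.2, smul_zero]
  lie_mem' := by
    intro A B hA hB
    refine ⟨?_, ?_⟩
    · rw [leibniz_lie, hA.1, hB.1]
      simp
    · -- trace part
      have hcomm : Z * A = A * Z := by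
        have := hA.1
        rw [Ring.lie_def, sub_eq_zero] at this
        exact this
      rw [Ring.lie_def, Matrix.mul_sub, Matrix.trace_sub, hZ]
      have h1 : ((-Z) * (A * B)).trace = -((Z * A) * B).trace := by
        rw [Matrix.neg_mul, Matrix.trace_neg, Matrix.mul_assoc]
      have h2 : ((-Z) * (B * A)).trace = -((Z * B) * A).trace := by
        rw [Matrix.neg_mul, Matrix.trace_neg, Matrix.mul_assoc]
      rw [h1, h2, hcomm]
      rw [Matrix.mul_assoc, Matrix.trace_mul_comm]
      ring

include halt in
lemma central_trace_zero (Z : Matrix (Fin n) (Fin n) ℝ) (hZ : Zᵀ = -Z)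
    (hc : ∀ X, ⁅Z, matT n T X⁆ = 0) :
    ∀ A ∈ gStarT n T, (Zᵀ * A).trace = 0 := by
  intro A hA
  have h : gStarT n T ≤ commTrace n Z hZ := by
    apply LieSubalgebra.lieSpan_le.mpr
    rintro B ⟨X, rfl⟩
    exact ⟨hc X, key_trace n T halt Z hc X⟩
  exact (h hA).2

/-- A matrix with zero self-trace-form is zero. -/
lemma trace_transpose_self_eq_zero (Z : Matrix (Fin n) (Fin n) ℝ)
    (h : (Zᵀ * Z).trace = 0) : Z = 0 := by
  have hsum : ∑ j, ∑ k, Z k j * Z k j = 0 := by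
    rw [← h, Matrix.trace]
    simp only [Matrix.diag_apply, Matrix.mul_apply, Matrix.transpose_apply]
  ext a b
  have hnn : ∀ j ∈ (Finset.univ : Finset (Fin n)), 0 ≤ ∑ k, Z k j * Z k j := by
    intro j _
    exact Finset.sum_nonneg fun k _ => mul_self_nonneg _
  have h1 := (Finset.sum_eq_zero_iff_of_nonneg hnn).mp hsum b (Finset.mem_univ b)
  have h2 := (Finset.sum_eq_zero_iff_of_nonneg
    (fun k _ => mul_self_nonneg (Z k b))).mp h1 a (Finset.mem_univ a)
  have := mul_self_eq_zero.mp h2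
  simpa using this

end Aux

section Main

variable {n : ℕ} {T : Fin n → Fin n → Fin n → ℝ}

lemma inv_aux (x y z : Matrix (Fin n) (Fin n) ℝ) (hx : xᵀ = -x) (hy : yᵀ = -y) :
    ((⁅x,y⁆)ᵀ * z).trace = -(yᵀ * ⁅x,z⁆).trace := by
  rw [Ring.lie_def, Ring.lie_def, Matrix.transpose_sub, Matrix.transpose_mul,
    Matrix.transpose_mul, hx, hy]
  simp only [Matrix.neg_mul, Matrix.mul_neg, neg_neg, Matrix.sub_mul, Matrix.mul_sub,
    Matrix.trace_sub, Matrix.trace_neg, neg_sub, neg_neg]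
  have h1 : (x * y * z).trace = (y * (z * x)).trace := by
    rw [Matrix.mul_assoc, Matrix.trace_mul_comm, Matrix.mul_assoc]
  have h2 : (y * x * z).trace = (y * (x * z)).trace := by
    rw [Matrix.mul_assoc]
  rw [h1, h2]
  ring

end Main

/-- For any 3-form `T ∈ Λ³(ℝⁿ)` the Lie algebra `g*_T` is
semisimple and coincides with its derived algebra `[g*_T, g*_T]`. -/
theorem gStarT_isSemisimple_and_perfect (n : ℕ)
    (T : Fin n → Fin n → Fin n → ℝ)
    (halt : ∀ i j k : Fin n, T i j k = - T j i k ∧ T i j k = - T i k j) :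
    LieAlgebra.IsSemisimple ℝ ↥(gStarT n T)
      ∧ LieAlgebra.derivedSeries ℝ ↥(gStarT n T) 1 = ⊤ := by
  classical
  set M := Matrix (Fin n) (Fin n) ℝ with hM
  set g := gStarT n T with hg
  have hskew : ∀ x : ↥g, (x : M)ᵀ = -(x : M) := fun x => gStarT_skew n T halt _ x.2
  let Φ : LinearMap.BilinForm ℝ ↥g :=
    LinearMap.mk₂ ℝ (fun x y : ↥g => (((x : M))ᵀ * (y : M)).trace)
      (fun x x' y => by
        show (((x : M) + (x' : M))ᵀ * (y : M)).trace
          = ((x : M)ᵀ * (y : M)).trace + ((x' : M)ᵀ * (y : M)).trace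
        rw [Matrix.transpose_add, Matrix.add_mul, Matrix.trace_add])
      (fun c x y => by
        show ((c • (x : M))ᵀ * (y : M)).trace = c • ((x : M)ᵀ * (y : M)).trace
        rw [Matrix.transpose_smul, Matrix.smul_mul, Matrix.trace_smul])
      (fun x y y' => by
        show ((x : M)ᵀ * ((y : M) + (y' : M))).trace
          = ((x : M)ᵀ * (y : M)).trace + ((x : M)ᵀ * (y' : M)).trace
        rw [Matrix.mul_add, Matrix.trace_add])
      (fun c x y => by
        show ((x : M)ᵀ * (c • (y : M))).trace = c • ((x : M)ᵀ * (y : M)).trace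
        rw [Matrix.mul_smul, Matrix.trace_smul])
  have hΦ_apply : ∀ x y : ↥g, Φ x y = (((x : M))ᵀ * (y : M)).trace := fun x y => rfl
  have hsymm : ∀ x y : ↥g, Φ x y = Φ y x := by
    intro x y
    rw [hΦ_apply, hΦ_apply]
    conv_lhs => rw [← Matrix.trace_transpose, Matrix.transpose_mul, Matrix.transpose_transpose]
  have hΦ_refl : Φ.IsRefl := by
    intro x y h
    rw [hsymm]; exact h
  have hdef : ∀ x : ↥g, Φ x x = 0 → x = 0 := by
    intro x hx
    rw [hΦ_apply] at hx
    have := trace_transpose_self_eq_zero n _ hx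
    exact Subtype.ext this
  have hΦ_nondeg : Φ.Nondegenerate :=
    hΦ_refl.nondegenerate_iff_separatingLeft.mpr fun x hx => hdef x (hx x)
  have hΦ_inv : Φ.lieInvariant ↥g := by
    intro x y z
    rw [hΦ_apply, hΦ_apply]
    exact inv_aux (x : M) (y : M) (z : M) (hskew x) (hskew y)
  have hL : ∀ I : LieIdeal ℝ ↥g, IsAtom I → ¬IsLieAbelian I := by
    intro I hI habel
    obtain ⟨x, hxI, hx0⟩ : ∃ x ∈ I, x ≠ 0 := by
      by_contra hcon
      push_neg at hcon
      exact hI.1 ((LieSubmodule.eq_bot_iff I).mpr hcon)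
    -- x is central in g
    have hcent : ∀ y : ↥g, ⁅x, y⁆ = 0 := by
      intro y
      have hu : ⁅x, y⁆ ∈ I := by
        have h1 : ⁅y, x⁆ ∈ I := I.lie_mem hxI
        have h2 : ⁅x, y⁆ = -⁅y, x⁆ := (lie_skew x y).symm
        rw [h2]; exact neg_mem h1
      have hzz : ⁅x, ⁅x, y⁆⁆ = 0 := by
        have h := habel.trivial (⟨x, hxI⟩ : I) (⟨⁅x, y⁆, hu⟩ : I)
        exact congrArg Subtype.val h
      have hΦzero : Φ ⁅x, y⁆ ⁅x, y⁆ = 0 := by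
        rw [hΦ_inv x y ⁅x, y⁆, hzz]
        simp
      exact hdef _ hΦzero
    -- pass to matrices
    set Zm : M := (x : M) with hZm
    have hZskew : Zmᵀ = -Zm := hskew x
    have hcM : ∀ X, ⁅Zm, matT n T X⁆ = 0 := by
      intro X
      have hmem : matT n T X ∈ g := LieSubalgebra.subset_lieSpan ⟨X, rfl⟩
      have h := hcent ⟨matT n T X, hmem⟩
      exact congrArg Subtype.val h
    have htr : (Zmᵀ * Zm).trace = 0 :=
      central_trace_zero n T halt Zm hZskew hcM Zm x.2
    exact hx0 (Subtype.ext (trace_transpose_self_eq_zero n Zm htr))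
  have hss : LieAlgebra.IsSemisimple ℝ ↥g :=
    LieAlgebra.InvariantForm.isSemisimple_of_nondegenerate Φ hΦ_nondeg hΦ_inv hΦ_refl hL
  refine ⟨hss, ?_⟩
  letI := hss
  have hD : LieAlgebra.derivedSeries ℝ ↥g 1 = ⁅(⊤ : LieIdeal ℝ ↥g), (⊤ : LieIdeal ℝ ↥g)⁆ := by
    rw [LieAlgebra.derivedSeries_def, LieAlgebra.derivedSeriesOfIdeal_succ,
      LieAlgebra.derivedSeriesOfIdeal_zero]
  set D := LieAlgebra.derivedSeries ℝ ↥g 1 with hDdef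
  have habelc : IsLieAbelian ↥(Dᶜ : LieIdeal ℝ ↥g) := by
    rw [LieAlgebra.abelian_iff_derived_one_eq_bot, LieAlgebra.derivedSeriesOfIdeal_succ,
      LieAlgebra.derivedSeriesOfIdeal_zero]
    have h1 : ⁅(Dᶜ : LieIdeal ℝ ↥g), (Dᶜ : LieIdeal ℝ ↥g)⁆ ≤ D := by
      rw [hD]; exact LieSubmodule.mono_lie le_top le_top
    have h2 : ⁅(Dᶜ : LieIdeal ℝ ↥g), (Dᶜ : LieIdeal ℝ ↥g)⁆ ≤ Dᶜ :=
      LieSubmodule.lie_le_right _ _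
    have h3 := le_inf h1 h2
    rw [inf_compl_eq_bot] at h3
    exact le_bot_iff.mp h3
  have hbot : (Dᶜ : LieIdeal ℝ ↥g) = ⊥ :=
    (LieAlgebra.hasTrivialRadical_iff_no_abelian_ideals ℝ ↥g).mp inferInstance _ habelc
  rwa [compl_eq_bot] at hbot
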